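/- Let A be a countably generated, uniformly closed, point-separating algebra of bounded real-valued functions on a nonempty set X, and let E be a sup-norm-separable quadratic form on A (i.e. there is a generating sequence (f_n) ⊂ A with E(f_n) < ∞ for all n) on which normal contractions operate. Then the effective domain D = {f ∈ A : E(f) < ∞} is a uniformly dense subalgebra of A. -/

import Mathlib

open scoped ENNReal BigOperators
open Filter

/-- A normal contraction in `k` variables. -/
def IsNormalContraction {k : ℕ} (F : (Fin k → ℝ) → ℝ) : Prop :=
  F 0 = 0 ∧ ∀ x y : Fin k → ℝ, |F x - F y| ≤ ∑ i, |x i - y i|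

/-- Normal contractions operate on a quadratic form `E` on `A`. -/
def NormalContractionsOperate {X : Type*} (A : Set (X → ℝ)) (E : (X → ℝ) → ℝ≥0∞) : Prop :=
  ∀ (k : ℕ) (F : (Fin k → ℝ) → ℝ), IsNormalContraction F →
    ∀ f : Fin k → X → ℝ, (∀ i, f i ∈ A) →
      E (fun x => F (fun i => f i x)) ^ (1/2 : ℝ) ≤ ∑ i, E (f i) ^ (1/2 : ℝ)

/-- If `E` is a sup-norm-separable quadratic form on a countably generated,
uniformly closed, point-separating algebra `A` of bounded functions and normal
contractions operate on `E`, then the effective domain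
`D = {f ∈ A : E f < ∞}` is a uniformly dense subalgebra of `A`. -/
theorem stmt19 {X : Type*} [Nonempty X] (A : Set (X → ℝ)) (E : (X → ℝ) → ℝ≥0∞)
    -- `A` is an algebra of bounded functions …
    (hAadd : ∀ f ∈ A, ∀ g ∈ A, f + g ∈ A)
    (hAmul : ∀ f ∈ A, ∀ g ∈ A, f * g ∈ A)
    (hAsmul : ∀ (c : ℝ), ∀ f ∈ A, c • f ∈ A)
    (hbdd : ∀ f ∈ A, ∃ C : ℝ, ∀ x, |f x| ≤ C)
    -- … uniformly closed …
    (hclosed : ∀ (g : ℕ → X → ℝ) (h : X → ℝ), (∀ n, g n ∈ A) →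
      TendstoUniformly g h atTop → h ∈ A)
    -- … separating the points of `X` …
    (hsep : ∀ x y : X, x ≠ y → ∃ f ∈ A, f x ≠ f y)
    -- … and generated, as a uniformly closed algebra, by the sequence `fn`:
    (fn : ℕ → X → ℝ) (hfnA : ∀ n, fn n ∈ A)
    (hgen : ∀ B : Set (X → ℝ),
      (∀ f ∈ B, ∀ g ∈ B, f + g ∈ B) →
      (∀ f ∈ B, ∀ g ∈ B, f * g ∈ B) →
      (∀ (c : ℝ), ∀ f ∈ B, c • f ∈ B) →
      (∀ (g : ℕ → X → ℝ) (h : X → ℝ), (∀ n, g n ∈ B) →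
        TendstoUniformly g h atTop → h ∈ B) →
      (∀ n, fn n ∈ B) → A ⊆ B)
    -- `E` is a quadratic form on `A`, sup-norm-separable along `fn` …
    (hscale : ∀ (c : ℝ) (f : X → ℝ), f ∈ A → E (c • f) = ENNReal.ofReal (c ^ 2) * E f)
    (hpar : ∀ f g : X → ℝ, f ∈ A → g ∈ A → E f < ∞ → E g < ∞ →
      E (f + g) + E (f - g) = 2 * E f + 2 * E g)
    (hfnE : ∀ n, E (fn n) < ∞)
    -- … and normal contractions operate on `E`.
    (hop : NormalContractionsOperate A E) :
    -- `D` is a subalgebra …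
    (∀ f ∈ {h ∈ A | E h < ∞}, ∀ g ∈ {h ∈ A | E h < ∞},
      f + g ∈ {h ∈ A | E h < ∞} ∧ f * g ∈ {h ∈ A | E h < ∞}) ∧
    (∀ (c : ℝ), ∀ f ∈ {h ∈ A | E h < ∞}, c • f ∈ {h ∈ A | E h < ∞}) ∧
    -- … uniformly dense in `A`:
    (∀ g ∈ A, ∃ h : ℕ → X → ℝ, (∀ n, h n ∈ {h' ∈ A | E h' < ∞}) ∧
      TendstoUniformly h g atTop) := by
  classical
  have hhalf : (0:ℝ) < 1/2 := by norm_num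
  -- if the square root of `a` is dominated by something finite, `a` is finite
  have sqrt_fin : ∀ a b : ℝ≥0∞, a ^ (1/2:ℝ) ≤ b → b < ∞ → a < ∞ := by
    intro a b hab hb
    by_contra h
    push_neg at h
    rw [top_le_iff.mp h, ENNReal.top_rpow_of_pos hhalf] at hab
    exact hb.ne (top_le_iff.mp hab)
  -- closure of D under addition
  have addD : ∀ f ∈ {h ∈ A | E h < ∞}, ∀ g ∈ {h ∈ A | E h < ∞},
      f + g ∈ {h ∈ A | E h < ∞} := by
    rintro f ⟨hfA, hfE⟩ g ⟨hgA, hgE⟩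
    refine ⟨hAadd f hfA g hgA, ?_⟩
    have hF : IsNormalContraction (fun x : Fin 2 → ℝ => x 0 + x 1) := by
      refine ⟨by simp, fun x y => ?_⟩
      rw [Fin.sum_univ_two]
      calc |(x 0 + x 1) - (y 0 + y 1)| = |(x 0 - y 0) + (x 1 - y 1)| := by ring_nf
        _ ≤ |x 0 - y 0| + |x 1 - y 1| := abs_add_le _ _
    have h2 := hop 2 _ hF ![f, g] (by
      intro i; fin_cases i <;> simpa)
    rw [Fin.sum_univ_two] at h2
    have heq : (fun x => (fun i => (![f, g] : Fin 2 → X → ℝ) i x) 0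
        + (fun i => (![f, g] : Fin 2 → X → ℝ) i x) 1) = f + g := by
      funext x; simp
    simp only [Matrix.cons_val_zero, Matrix.cons_val_one, Matrix.head_cons] at h2
    have h3 : E (f + g) ^ (1/2:ℝ) ≤ E f ^ (1/2:ℝ) + E g ^ (1/2:ℝ) := by
      have : (fun x => f x + g x) = f + g := rfl
      rwa [this] at h2
    exact sqrt_fin _ _ h3
      (ENNReal.add_lt_top.mpr ⟨ENNReal.rpow_lt_top_of_nonneg hhalf.le hfE.ne,
        ENNReal.rpow_lt_top_of_nonneg hhalf.le hgE.ne⟩)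
  -- closure of D under scalar multiplication
  have smulD : ∀ (c : ℝ), ∀ f ∈ {h ∈ A | E h < ∞}, c • f ∈ {h ∈ A | E h < ∞} := by
    rintro c f ⟨hfA, hfE⟩
    refine ⟨hAsmul c f hfA, ?_⟩
    rw [hscale c f hfA]
    exact ENNReal.mul_lt_top ENNReal.ofReal_lt_top hfE
  -- closure of D under multiplication
  have mulD : ∀ f ∈ {h ∈ A | E h < ∞}, ∀ g ∈ {h ∈ A | E h < ∞},
      f * g ∈ {h ∈ A | E h < ∞} := by
    rintro f ⟨hfA, hfE⟩ g ⟨hgA, hgE⟩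
    refine ⟨hAmul f hfA g hgA, ?_⟩
    obtain ⟨Cf, hCf⟩ := hbdd f hfA
    obtain ⟨Cg, hCg⟩ := hbdd g hgA
    set C : ℝ := max Cf Cg + 1 with hCdef
    have hC0 : 0 < C := by
      have h1 := hCf (Classical.arbitrary X)
      have h2 := abs_nonneg (f (Classical.arbitrary X))
      have h3 := le_max_left Cf Cg
      linarith
    set cl : ℝ → ℝ := fun t => min C (max (-C) t) with hcldef
    have hclLip : ∀ t s, |cl t - cl s| ≤ |t - s| := by
      intro t s
      refine (abs_min_sub_min_le_max _ _ _ _).trans ?_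
      rw [sub_self, abs_zero]
      refine max_le (abs_nonneg _) ?_
      refine (abs_max_sub_max_le_max _ _ _ _).trans ?_
      rw [sub_self, abs_zero]
      exact max_le (abs_nonneg _) le_rfl
    have hclabs : ∀ t, |cl t| ≤ C := by
      intro t
      rw [abs_le]
      exact ⟨le_min (by linarith) (le_max_left _ _), min_le_left _ _⟩
    have hclid : ∀ t, |t| ≤ C → cl t = t := by
      intro t ht
      rw [abs_le] at ht
      rw [hcldef]
      simp only [max_eq_right ht.1, min_eq_right ht.2]
    set F : (Fin 2 → ℝ) → ℝ := fun x => cl (x 0) * cl (x 1) / (2*C) with hFdef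
    have hF : IsNormalContraction F := by
      constructor
      · have h0 : cl 0 = 0 := hclid 0 (by simpa using hC0.le)
        simp [hFdef, h0]
      · intro x y
        have e1 : |cl (x 0) * (cl (x 1) - cl (y 1))| ≤ C * |x 1 - y 1| := by
          rw [abs_mul]
          exact mul_le_mul (hclabs _) (hclLip _ _) (abs_nonneg _) hC0.le
        have e2 : |(cl (x 0) - cl (y 0)) * cl (y 1)| ≤ |x 0 - y 0| * C := by
          rw [abs_mul]
          exact mul_le_mul (hclLip _ _) (hclabs _) (abs_nonneg _) (abs_nonneg _)
        have key : |cl (x 0) * cl (x 1) - cl (y 0) * cl (y 1)|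
            ≤ C * |x 1 - y 1| + |x 0 - y 0| * C := by
          calc |cl (x 0) * cl (x 1) - cl (y 0) * cl (y 1)|
              = |cl (x 0) * (cl (x 1) - cl (y 1)) + (cl (x 0) - cl (y 0)) * cl (y 1)| := by
                ring_nf
            _ ≤ |cl (x 0) * (cl (x 1) - cl (y 1))| + |(cl (x 0) - cl (y 0)) * cl (y 1)| :=
                abs_add_le _ _
            _ ≤ C * |x 1 - y 1| + |x 0 - y 0| * C := add_le_add e1 e2
        have hFxy : |F x - F y| = |cl (x 0) * cl (x 1) - cl (y 0) * cl (y 1)| / (2*C) := by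
          rw [hFdef]
          rw [div_sub_div_same, abs_div, abs_of_pos (show (0:ℝ) < 2*C by linarith)]
        rw [Fin.sum_univ_two, hFxy, div_le_iff₀ (by linarith)]
        have ha := abs_nonneg (x 0 - y 0)
        have hb := abs_nonneg (x 1 - y 1)
        nlinarith [key]
    have hfC : ∀ x, |f x| ≤ C := fun x => (hCf x).trans (by
      have := le_max_left Cf Cg; linarith)
    have hgC : ∀ x, |g x| ≤ C := fun x => (hCg x).trans (by
      have := le_max_right Cf Cg; linarith)
    set u : X → ℝ := (1/(2*C)) • (f * g) with hudef
    have huA : u ∈ A := hAsmul _ _ (hAmul f hfA g hgA)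
    have hueq : (fun x => F (fun i => (![f, g] : Fin 2 → X → ℝ) i x)) = u := by
      funext x
      simp only [hFdef, hudef, Matrix.cons_val_zero, Matrix.cons_val_one, Matrix.head_cons,
        Pi.smul_apply, Pi.mul_apply, smul_eq_mul]
      rw [hclid _ (hfC x), hclid _ (hgC x)]
      field_simp
    have huE : E u < ∞ := by
      have h2 := hop 2 F hF ![f, g] (by intro i; fin_cases i <;> simpa)
      rw [hueq, Fin.sum_univ_two] at h2
      simp only [Matrix.cons_val_zero, Matrix.cons_val_one, Matrix.head_cons] at h2
      exact sqrt_fin _ _ h2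
        (ENNReal.add_lt_top.mpr ⟨ENNReal.rpow_lt_top_of_nonneg hhalf.le hfE.ne,
          ENNReal.rpow_lt_top_of_nonneg hhalf.le hgE.ne⟩)
    have hfg : f * g = (2*C) • u := by
      funext x
      simp only [hudef, Pi.smul_apply, Pi.mul_apply, smul_eq_mul]
      field_simp
    rw [hfg, hscale _ _ huA]
    exact ENNReal.mul_lt_top ENNReal.ofReal_lt_top huE
  refine ⟨fun f hf g hg => ⟨addD f hf g hg, mulD f hf g hg⟩, smulD, ?_⟩
  -- density
  set B : Set (X → ℝ) := {g : X → ℝ | g ∈ A ∧ ∃ h : ℕ → X → ℝ,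
    (∀ n, h n ∈ {h' ∈ A | E h' < ∞}) ∧ TendstoUniformly h g atTop} with hBdef
  have hsub : A ⊆ B := by
    apply hgen
    · -- addition
      rintro f ⟨hfA, hf, hfD, hfU⟩ g ⟨hgA, hg, hgD, hgU⟩
      refine ⟨hAadd f hfA g hgA, fun n => hf n + hg n,
        fun n => addD _ (hfD n) _ (hgD n), ?_⟩
      rw [Metric.tendstoUniformly_iff] at hfU hgU ⊢
      intro ε hε
      filter_upwards [hfU (ε/2) (by linarith), hgU (ε/2) (by linarith)] with n h1 h2 x
      have := dist_add_add_le_of_le (h1 x).le (h2 x).le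
      simp only [Pi.add_apply]
      calc dist (f x + g x) (hf n x + hg n x)
          ≤ dist (f x) (hf n x) + dist (g x) (hg n x) := dist_add_add_le _ _ _ _
        _ < ε/2 + ε/2 := add_lt_add (h1 x) (h2 x)
        _ = ε := by ring
    · -- multiplication
      rintro f ⟨hfA, hf, hfD, hfU⟩ g ⟨hgA, hg, hgD, hgU⟩
      refine ⟨hAmul f hfA g hgA, fun n => hf n * hg n,
        fun n => mulD _ (hfD n) _ (hgD n), ?_⟩
      obtain ⟨Cf, hCf⟩ := hbdd f hfA
      obtain ⟨Cg, hCg⟩ := hbdd g hgA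
      set M : ℝ := max Cf Cg + 1 with hMdef
      have hM : 0 < M := by
        have h1 := hCf (Classical.arbitrary X)
        have h2 := abs_nonneg (f (Classical.arbitrary X))
        have h3 := le_max_left Cf Cg
        linarith
      rw [Metric.tendstoUniformly_iff] at hfU hgU ⊢
      intro ε hε
      have hδ : 0 < ε/(2*M) := by positivity
      filter_upwards [hfU (min 1 (ε/(2*M))) (lt_min one_pos hδ),
        hgU (ε/(2*M)) hδ] with n h1 h2 x
      have d1 : |f x - hf n x| < min 1 (ε/(2*M)) := by
        rw [← Real.dist_eq]; exact h1 x
      have d2 : |g x - hg n x| < ε/(2*M) := by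
        rw [← Real.dist_eq]; exact h2 x
      have hfxM : |f x| ≤ M := (hCf x).trans (by have := le_max_left Cf Cg; linarith)
      have hhfM : |hf n x| ≤ M := by
        have : |hf n x| ≤ |f x| + |f x - hf n x| := by
          have := abs_sub_abs_le_abs_sub (hf n x) (f x)
          rw [abs_sub_comm (hf n x) (f x)] at this
          linarith
        have h4 := (lt_min_iff.mp d1).1
        have h5 := le_max_left Cf Cg
        have h6 := hCf x
        linarith
      have e1 : |f x * g x - hf n x * hg n x|
          ≤ |hf n x| * |g x - hg n x| + |f x - hf n x| * |g x| := by
        calc |f x * g x - hf n x * hg n x|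
            = |hf n x * (g x - hg n x) + (f x - hf n x) * g x| := by ring_nf
          _ ≤ |hf n x * (g x - hg n x)| + |(f x - hf n x) * g x| := abs_add_le _ _
          _ = |hf n x| * |g x - hg n x| + |f x - hf n x| * |g x| := by
              rw [abs_mul, abs_mul]
      have hgxM : |g x| ≤ M := (hCg x).trans (by have := le_max_right Cf Cg; linarith)
      have d1' : |f x - hf n x| < ε/(2*M) := (lt_min_iff.mp d1).2
      simp only [Pi.mul_apply]
      rw [Real.dist_eq]
      calc |f x * g x - hf n x * hg n x|
          ≤ |hf n x| * |g x - hg n x| + |f x - hf n x| * |g x| := e1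
        _ ≤ M * |g x - hg n x| + |f x - hf n x| * M := add_le_add
            (mul_le_mul_of_nonneg_right hhfM (abs_nonneg _))
            (mul_le_mul_of_nonneg_left hgxM (abs_nonneg _))
        _ < M * (ε/(2*M)) + (ε/(2*M)) * M := add_lt_add
            (mul_lt_mul_of_pos_left d2 hM) (mul_lt_mul_of_pos_right d1' hM)
        _ = ε := by field_simp; ring
    · -- scalar multiplication
      rintro c f ⟨hfA, hf, hfD, hfU⟩
      refine ⟨hAsmul c f hfA, fun n => c • hf n, fun n => smulD c _ (hfD n), ?_⟩
      rw [Metric.tendstoUniformly_iff] at hfU ⊢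
      intro ε hε
      filter_upwards [hfU (ε/(|c|+1)) (by positivity)] with n h1 x
      have h2 : dist (f x) (hf n x) * (|c| + 1) < ε := by
        rw [← lt_div_iff₀ (by positivity)]
        exact h1 x
      have h3 : dist (c • f x) (c • hf n x) = |c| * dist (f x) (hf n x) := by
        simp only [smul_eq_mul, Real.dist_eq, ← abs_mul]
        ring_nf
      simp only [Pi.smul_apply]
      rw [h3]
      nlinarith [dist_nonneg (x := f x) (y := hf n x), abs_nonneg c]
    · -- closed under uniform limits
      rintro g h hgB hU
      have hgA' : ∀ n, g n ∈ A := fun n => (hgB n).1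
      refine ⟨hclosed g h hgA' hU, ?_⟩
      choose seq hseqD hseqU using fun n => (hgB n).2
      have hpick : ∀ n : ℕ, ∃ m, ∀ x, dist (g n x) (seq n m x) < 1/((n:ℝ)+1) := by
        intro n
        exact ((Metric.tendstoUniformly_iff.mp (hseqU n)) (1/((n:ℝ)+1))
          (by positivity)).exists
      choose φ hφ using hpick
      refine ⟨fun n => seq n (φ n), fun n => hseqD n (φ n), ?_⟩
      rw [Metric.tendstoUniformly_iff]
      intro ε hε
      have h1 := Metric.tendstoUniformly_iff.mp hU (ε/2) (by linarith)
      have h2 : ∀ᶠ n : ℕ in atTop, 1/((n:ℝ)+1) < ε/2 :=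
        tendsto_one_div_add_atTop_nhds_zero_nat.eventually (gt_mem_nhds (by linarith))
      filter_upwards [h1, h2] with n hn1 hn2 x
      calc dist (h x) (seq n (φ n) x)
          ≤ dist (h x) (g n x) + dist (g n x) (seq n (φ n) x) := dist_triangle _ _ _
        _ < ε/2 + ε/2 := add_lt_add (hn1 x) ((hφ n x).trans hn2)
        _ = ε := by ring
    · -- contains the generators
      intro n
      refine ⟨hfnA n, fun _ => fn n, fun _ => ⟨hfnA n, hfnE n⟩, ?_⟩
      rw [Metric.tendstoUniformly_iff]
      intro ε hε
      filter_upwards with m x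
      simpa using hε
  exact fun g hg => (hsub hg).2
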